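/- Let a < b be real numbers, let u : [a, b] → ℝ be continuous with u(x) > 0 for all x ∈ [a, b], and let F : [a, b] → ℝ be continuously differentiable such that the product u·F' is differentiable on [a, b] with (u·F')'(x) = 0 for all x ∈ [a, b]. If u(a)·F(a)·F'(a) ≥ 0 and u(b)·F(b)·F'(b) ≤ 0, then F is constant on [a, b]. (The one-dimensional case of Proposition 2.1: the conservation law ∇·(u∇F) = 0 together with the boundary sign condition u·F·∂F/∂ν ≤ 0 forces F to be constant.) -/
import Mathlib


/-- One-dimensional case of Proposition 2.1: if `(u·F')' = 0` on `[a,b]`,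
`u > 0`, and the boundary sign conditions `u(a)F(a)F'(a) ≥ 0`,
`u(b)F(b)F'(b) ≤ 0` hold, then `F` is constant on `[a,b]`. -/
theorem stmt_15 (a b : ℝ) (hab : a < b)
    (u F F' : ℝ → ℝ)
    (hu_cont : ContinuousOn u (Set.Icc a b))
    (hu_pos : ∀ x ∈ Set.Icc a b, 0 < u x)
    (hF : ∀ x ∈ Set.Icc a b, HasDerivAt F (F' x) x)
    (hF'_cont : ContinuousOn F' (Set.Icc a b))
    (hflux : ∀ x ∈ Set.Icc a b, HasDerivAt (fun y => u y * F' y) 0 x)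
    (hbc_a : 0 ≤ u a * F a * F' a)
    (hbc_b : u b * F b * F' b ≤ 0) :
    ∀ x ∈ Set.Icc a b, F x = F a := by
  have hmem_a : a ∈ Set.Icc a b := Set.left_mem_Icc.2 hab.le
  have hmem_b : b ∈ Set.Icc a b := Set.right_mem_Icc.2 hab.le
  -- the flux u * F' is constant on [a,b]
  have hc : ∀ x ∈ Set.Icc a b, u x * F' x = u a * F' a := by
    apply constant_of_has_deriv_right_zero
    · exact fun x hx => ((hflux x hx).continuousAt).continuousWithinAt
    · intro x hx
      exact ((hflux x (Set.mem_Icc_of_Ico hx)).hasDerivWithinAt)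
  set c := u a * F' a with hcdef
  have hF'eq : ∀ x ∈ Set.Icc a b, F' x = c / u x := by
    intro x hx
    have hux := hu_pos x hx
    field_simp
    linarith [hc x hx]
  -- continuity of F on [a,b]
  have hFc : ContinuousOn F (Set.Icc a b) :=
    fun x hx => ((hF x hx).continuousAt).continuousWithinAt
  have hinter : interior (Set.Icc a b) = Set.Ioo a b := interior_Icc
  have hderiv : ∀ x ∈ Set.Ioo a b, deriv F x = F' x := by
    intro x hx
    exact (hF x (Set.mem_Icc_of_Ioo hx)).deriv
  have hbc_a' : 0 ≤ F a * c := by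
    have : u a * F a * F' a = F a * (u a * F' a) := by ring
    rw [hcdef]; linarith [hbc_a, this]
  have hbc_b' : F b * c ≤ 0 := by
    have h1 : u b * F b * F' b = F b * (u b * F' b) := by ring
    have h2 := hc b hmem_b
    rw [h2] at h1; linarith [hbc_b]
  rcases lt_trichotomy c 0 with hneg | hzero | hpos
  · -- c < 0 : F strictly decreasing, contradiction
    exfalso
    have hanti : StrictAntiOn F (Set.Icc a b) := by
      apply StrictAntiOn.mono (strictAntiOn_of_deriv_neg (convex_Icc a b) hFc ?_) le_rfl
      intro x hx
      rw [hinter] at hx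
      rw [hderiv x hx, hF'eq x (Set.mem_Icc_of_Ioo hx)]
      exact div_neg_of_neg_of_pos hneg (hu_pos x (Set.mem_Icc_of_Ioo hx))
    have hlt : F b < F a := hanti hmem_a hmem_b hab
    -- F a ≤ 0 from hbc_a', F b ≥ 0 from hbc_b'
    nlinarith
  · -- c = 0 : F' = 0, so F constant
    intro x hx
    apply constant_of_has_deriv_right_zero (f := F) hFc
    · intro y hy
      have h := (hF y (Set.mem_Icc_of_Ico hy)).hasDerivWithinAt (s := Set.Ici y)
      have : F' y = 0 := by
        rw [hF'eq y (Set.mem_Icc_of_Ico hy), hzero, zero_div]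
      rwa [this] at h
    · exact hx
  · -- c > 0 : F strictly increasing, contradiction
    exfalso
    have hmono : StrictMonoOn F (Set.Icc a b) := by
      apply strictMonoOn_of_deriv_pos (convex_Icc a b) hFc
      intro x hx
      rw [hinter] at hx
      rw [hderiv x hx, hF'eq x (Set.mem_Icc_of_Ioo hx)]
      exact div_pos hpos (hu_pos x (Set.mem_Icc_of_Ioo hx))
    have hlt : F a < F b := hmono hmem_a hmem_b hab
    nlinarith
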